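/- Suppose height(C_k) is strictly greater than the maximal column height of D^k. Then every line of ℓ(D) joining a box of D^k to a box of C_k is labelled 1, and the boxes of D^k that are joined to a box of C_k by a line of ℓ(D) are exactly the boxes that are right extremal in D^k relative to ℓ(D^k). -/

import Mathlib

open scoped Classical

/-- height of column `j` of the diagram (columns numbered from 1). -/
def hgt (c : List ℕ) (j : ℕ) : ℕ := c.getD (j - 1) 0

/-- number of boxes in the columns strictly to the left of column `j`. -/
def off (c : List ℕ) (j : ℕ) : ℕ := (c.take (j - 1)).sum

/-- `(i, j)` (row `i`, column `j`) is a box of the diagram `D`. -/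
def IsBox (c : List ℕ) (i j : ℕ) : Prop :=
  1 ≤ j ∧ j ≤ c.length ∧ 1 ≤ i ∧ i ≤ hgt c j

/-- the entry of the box `(i, j)` in the tableau `T`. -/
def Tentry (c : List ℕ) (i j : ℕ) : ℕ := off c j + i

/-- the column of the box of `D` carrying entry `m` in `T`. -/
noncomputable def colOf (c : List ℕ) (m : ℕ) : ℕ := sInf {j | m ≤ (c.take j).sum}

/-- the row of the box of `D` carrying entry `m` in `T`. -/
noncomputable def rowOf (c : List ℕ) (m : ℕ) : ℕ := m - off c (colOf c m)

/-- the total order `≼` on entries: increasing down columns, then from right to left. -/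
def ple (c : List ℕ) (a b : ℕ) : Prop :=
  colOf c b < colOf c a ∨ (colOf c a = colOf c b ∧ a ≤ b)

/-- the strict version of `≼`. -/
def plt (c : List ℕ) (a b : ℕ) : Prop :=
  colOf c b < colOf c a ∨ (colOf c a = colOf c b ∧ a < b)

/-- column `j` has a left neighbour in `D`. -/
def HasLeftNb (c : List ℕ) (j : ℕ) : Prop :=
  ∃ i, 1 ≤ i ∧ i < j ∧ hgt c i = hgt c j ∧
    ∀ i', i < i' → i' < j → hgt c i' ≠ hgt c j

/-- the `j`-th column of the tableau `T`, rows to optional entries. -/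
def Tcol (c : List ℕ) (j : ℕ) : ℕ → Option ℕ := fun i =>
  if 1 ≤ i ∧ i ≤ hgt c j then some (Tentry c i j) else none

/-- one step of the propagation rule building `T(∞)`: the entry (if any) in row `t`
of column `j - 1` of `T(∞)` (given by `prev`) is propagated into the partially
built column `j` (given by `cur`). -/
noncomputable def propStep (c : List ℕ) (j : ℕ) (prev : ℕ → Option ℕ)
    (cur : ℕ → Option ℕ) (t : ℕ) : ℕ → Option ℕ :=
  match prev t with
  | none => cur
  | some l =>
    if hgt c j = t then
      if HasLeftNb c j ∧ cur (t + 1) = none then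
        Function.update cur (t + 1) (some l)
      else cur
    else
      if cur t = none then Function.update cur t (some l) else cur

/-- the `j`-th column of the composition tableau `T(∞)`. -/
noncomputable def TinfCol (c : List ℕ) : ℕ → ℕ → Option ℕ
  | 0 => fun _ => none
  | 1 => Tcol c 1
  | j + 2 =>
      (List.range (c.sum + 2)).foldl
        (propStep c (j + 2) (TinfCol c (j + 1))) (Tcol c (j + 2))

/-- labels of lines: `1` or `∗`. -/
inductive Lab : Type
  | one : Lab
  | star : Lab
deriving DecidableEq

/-- maximal height among the columns `1, …, j - 1`. -/
def maxHgt (c : List ℕ) (j : ℕ) : ℕ := (c.take (j - 1)).foldr max 0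

/-- the maximal column height of the diagram `D`. -/
def maxH (c : List ℕ) : ℕ := c.foldr max 0

/-- `LineB c a i j lab` : the line family `ℓ(D)` contains a line labelled `lab`
whose left end-point is the box of `D` carrying entry `a` in `T` and whose right
end-point is the box `(i, j)` (row `i` of column `C_j`). -/
def LineB (c : List ℕ) (a i j : ℕ) (lab : Lab) : Prop :=
  2 ≤ j ∧ j ≤ c.length ∧ 1 ≤ i ∧
    (match lab with
     | Lab.one =>
         (maxHgt c j < hgt c j ∧ i ≤ maxHgt c j + 1 ∧ TinfCol c (j - 1) i = some a)
       ∨ (hgt c j ≤ maxHgt c j ∧ i + 1 ≤ hgt c j ∧ TinfCol c (j - 1) i = some a)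
       ∨ (hgt c j ≤ maxHgt c j ∧ i = hgt c j ∧
           ¬(∃ j', 1 ≤ j' ∧ j' < j ∧ hgt c j' = hgt c j) ∧
           TinfCol c (j - 1) i = some a)
       ∨ (hgt c j ≤ maxHgt c j ∧ i = hgt c j ∧
           (∃ j', 1 ≤ j' ∧ j' < j ∧ hgt c j' = hgt c j) ∧
           TinfCol c (j - 1) (i + 1) = some a)
     | Lab.star =>
         hgt c j ≤ maxHgt c j ∧ i = hgt c j ∧
           (∃ j', 1 ≤ j' ∧ j' < j ∧ hgt c j' = hgt c j) ∧
           TinfCol c (j - 1) i = some a)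

/-- `LineE c a b lab` : `ℓ(D)` contains a line labelled `lab` joining the box of `D`
carrying entry `a` in `T` (on the left) to the box carrying entry `b` (on the right). -/
def LineE (c : List ℕ) (a b : ℕ) (lab : Lab) : Prop :=
  ∃ i j, LineB c a i j lab ∧ b = Tentry c i j

/-- the box `(i, j)` of `D` is right extremal relative to `ℓ(D)`. -/
def RExt (c : List ℕ) (i j : ℕ) : Prop :=
  IsBox c i j ∧ ∀ i' j', ¬ LineB c (Tentry c i j) i' j' Lab.one

/-- `c` is a composition of `n`. -/
def IsComposition (c : List ℕ) (n : ℕ) : Prop :=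
  c.sum = n ∧ ∀ x ∈ c, 0 < x

namespace S16

variable {c : List ℕ}

lemma foldr_max_le {l : List ℕ} {x : ℕ} (h : ∀ y ∈ l, y ≤ x) : l.foldr max 0 ≤ x := by
  induction l with
  | nil => simp
  | cons a t ih =>
    simp only [List.foldr_cons]
    exact max_le (h a (by simp)) (ih fun y hy => h y (by simp [hy]))

lemma le_foldr_max {l : List ℕ} {y : ℕ} (h : y ∈ l) : y ≤ l.foldr max 0 := by
  induction l with
  | nil => simp at h
  | cons a t ih =>
    rcases List.mem_cons.1 h with rfl | h
    · exact le_max_left _ _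
    · exact le_trans (ih h) (le_max_right _ _)

lemma foldr_max_init (l : List ℕ) (x : ℕ) : l.foldr max x = max (l.foldr max 0) x := by
  induction l with
  | nil => simp
  | cons a t ih => simp [ih, max_assoc]

lemma hgt_mem {j : ℕ} (h1 : 1 ≤ j) (h2 : j ≤ c.length) : hgt c j ∈ c := by
  unfold hgt
  rw [List.getD_eq_getElem c 0 (by omega)]
  exact List.getElem_mem _

lemma hgt_pos (hpos : ∀ x ∈ c, 0 < x) {j : ℕ} (h1 : 1 ≤ j) (h2 : j ≤ c.length) :
    1 ≤ hgt c j := hpos _ (hgt_mem h1 h2)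

lemma hgt_le_maxHgt {i j : ℕ} (h1 : 1 ≤ i) (h2 : i ≤ j) : hgt c i ≤ maxHgt c (j+1) := by
  by_cases hl : i ≤ c.length
  · apply le_foldr_max
    have hij : i - 1 < j := by omega
    have hil : i - 1 < c.length := by omega
    have hlen : i - 1 < (c.take j).length := by simp [List.length_take]; omega
    have : hgt c i = (c.take j)[i-1]'hlen := by
      unfold hgt
      rw [List.getD_eq_getElem c 0 hil]
      exact List.getElem_take.symm
    rw [this]
    exact List.getElem_mem _
  · unfold hgt
    rw [List.getD_eq_default c 0 (by omega)]
    omega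

lemma maxHgt_succ (j : ℕ) : maxHgt c (j+2) = max (maxHgt c (j+1)) (hgt c (j+1)) := by
  unfold maxHgt hgt
  have e2 : j + 2 - 1 = j + 1 := by omega
  have e1 : j + 1 - 1 = j := by omega
  rw [e2, e1]
  by_cases h : j < c.length
  · rw [List.take_succ, List.foldr_append, List.getElem?_eq_getElem h]
    rw [List.getD_eq_getElem c 0 h]
    simp only [Option.toList_some, List.foldr_cons, List.foldr_nil]
    rw [foldr_max_init]
    omega
  · rw [List.take_of_length_le (by omega), List.take_of_length_le (by omega),
      List.getD_eq_default c 0 (by omega)]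
    omega

lemma off_succ (j : ℕ) : off c (j+2) = off c (j+1) + hgt c (j+1) := by
  unfold off hgt
  have e2 : j + 2 - 1 = j + 1 := by omega
  have e1 : j + 1 - 1 = j := by omega
  rw [e2, e1]
  by_cases h : j < c.length
  · rw [List.sum_take_succ c j h, List.getD_eq_getElem c 0 h]
  · rw [List.take_of_length_le (by omega), List.take_of_length_le (by omega),
      List.getD_eq_default c 0 (by omega)]
    simp

lemma off_mono {j j' : ℕ} (h : j' ≤ j) : off c j' ≤ off c j := by
  induction j with
  | zero => interval_cases j' <;> simp
  | succ j ih =>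
    rcases Nat.lt_or_ge j' (j+1) with h' | h'
    · refine le_trans (ih (by omega)) ?_
      cases j with
      | zero => simp [off]
      | succ j => rw [off_succ]; omega
    · have hj : j' = j + 1 := by omega
      rw [hj]
      

lemma hasLeftNb_iff (c : List ℕ) (j : ℕ) :
    HasLeftNb c j ↔ ∃ j', 1 ≤ j' ∧ j' < j ∧ hgt c j' = hgt c j := by
  constructor
  · rintro ⟨i, h1, h2, h3, -⟩; exact ⟨i, h1, h2, h3⟩
  · rintro ⟨i, h1, h2, h3⟩
    classical
    set P := fun m => 1 ≤ m ∧ hgt c m = hgt c j with hP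
    have hPi : P i := ⟨h1, h3⟩
    have hle : i ≤ j - 1 := by omega
    have hspec := Nat.findGreatest_spec hle hPi
    have hub : Nat.findGreatest P (j-1) ≤ j - 1 := Nat.findGreatest_le (j-1)
    refine ⟨Nat.findGreatest P (j-1), hspec.1, by omega, hspec.2, ?_⟩
    intro i' hlt hlt2 hcon
    exact (Nat.findGreatest_is_greatest hlt (by omega)) ⟨by omega, hcon⟩

noncomputable def Mrow (c : List ℕ) : ℕ → ℕ
  | 0 => 0
  | j+1 => if HasLeftNb c (j+1) then max (hgt c (j+1) + 1) (Mrow c j)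
           else max (hgt c (j+1)) (Mrow c j)

noncomputable def F (c : List ℕ) : ℕ → ℕ → Option ℕ
  | 0 => fun _ => none
  | j+1 => fun i =>
      if 1 ≤ i ∧ i ≤ hgt c (j+1) then some (Tentry c i (j+1))
      else if HasLeftNb c (j+1) ∧ i = hgt c (j+1) + 1 then F c j (hgt c (j+1))
      else if 1 ≤ i ∧ i ≤ Mrow c j then F c j i
      else none

lemma Mrow_succ (c : List ℕ) (j : ℕ) :
    Mrow c (j+1) = if HasLeftNb c (j+1) then max (hgt c (j+1) + 1) (Mrow c j)
           else max (hgt c (j+1)) (Mrow c j) := rfl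

lemma F_succ (c : List ℕ) (j i : ℕ) :
    F c (j+1) i =
      if 1 ≤ i ∧ i ≤ hgt c (j+1) then some (Tentry c i (j+1))
      else if HasLeftNb c (j+1) ∧ i = hgt c (j+1) + 1 then F c j (hgt c (j+1))
      else if 1 ≤ i ∧ i ≤ Mrow c j then F c j i
      else none := rfl

lemma le_Mrow_succ (c : List ℕ) (j : ℕ) :
    max (hgt c (j+1)) (Mrow c j) ≤ Mrow c (j+1) := by
  rw [Mrow_succ]; split <;> omega

lemma maxHgt_le_Mrow (c : List ℕ) : ∀ j, maxHgt c (j+1) ≤ Mrow c j := by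
  intro j
  induction j with
  | zero => simp [maxHgt, Mrow]
  | succ j ih =>
    have h2 := le_Mrow_succ c j
    have hMj : Mrow c j ≤ Mrow c (j+1) := le_trans (le_max_right _ _) h2
    have hh : hgt c (j+1) ≤ Mrow c (j+1) := le_trans (le_max_left _ _) h2
    rw [maxHgt_succ]
    exact max_le (le_trans ih hMj) hh

lemma Mrow_le (c : List ℕ) : ∀ j, Mrow c j ≤ maxHgt c (j+1) + 1 := by
  intro j
  induction j with
  | zero => simp [maxHgt, Mrow]
  | succ j ih =>
    have e : maxHgt c (j+1+1) = max (maxHgt c (j+1)) (hgt c (j+1)) := maxHgt_succ j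
    have hA : maxHgt c (j+1) ≤ maxHgt c (j+1+1) := by rw [e]; exact le_max_left _ _
    have hB : hgt c (j+1) ≤ maxHgt c (j+1+1) := by rw [e]; exact le_max_right _ _
    rw [Mrow_succ]
    split
    · exact max_le (by omega) (by omega)
    · exact max_le (by omega) (by omega)

lemma hgt_le_of_LNb {c : List ℕ} {j : ℕ} (h : HasLeftNb c (j+1)) :
    hgt c (j+1) ≤ maxHgt c (j+1) := by
  obtain ⟨i, h1, h2, h3⟩ := (hasLeftNb_iff c (j+1)).1 h
  rw [← h3]
  exact hgt_le_maxHgt h1 (by omega)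

lemma F_zero_row (c : List ℕ) (j : ℕ) : F c j 0 = none := by
  cases j with
  | zero => rfl
  | succ j =>
    rw [F_succ, if_neg (by omega), if_neg (by omega), if_neg (by omega)]

lemma F_none_of_gt (c : List ℕ) : ∀ j i, Mrow c j < i → F c j i = none := by
  intro j
  induction j with
  | zero => intro i _; rfl
  | succ j ih =>
    intro i hi
    have hM := le_Mrow_succ c j
    have hM2 : HasLeftNb c (j+1) → hgt c (j+1) + 1 ≤ Mrow c (j+1) := by
      intro h; rw [Mrow_succ, if_pos h]; omega
    rw [F_succ, if_neg (by omega), if_neg (by intro ⟨hl, he⟩; have := hM2 hl; omega),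
      if_neg (by omega)]

lemma F_isSome (c : List ℕ) (hpos : ∀ x ∈ c, 0 < x) :
    ∀ j, j ≤ c.length → ∀ i, 1 ≤ i → i ≤ Mrow c j → ∃ a, F c j i = some a := by
  intro j
  induction j with
  | zero => intro _ i h1 h2; simp [Mrow] at h2; omega
  | succ j ih =>
    intro hlen i h1 h2
    by_cases hA1 : 1 ≤ i ∧ i ≤ hgt c (j+1)
    · exact ⟨_, by rw [F_succ, if_pos hA1]⟩
    · by_cases hA2 : HasLeftNb c (j+1) ∧ i = hgt c (j+1) + 1
      · have hh1 : 1 ≤ hgt c (j+1) := hgt_pos hpos (by omega) (by omega)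
        have hhm : hgt c (j+1) ≤ Mrow c j :=
          le_trans (hgt_le_of_LNb hA2.1) (maxHgt_le_Mrow c j)
        obtain ⟨a, ha⟩ := ih (by omega) _ hh1 hhm
        exact ⟨a, by rw [F_succ, if_neg hA1, if_pos hA2]; exact ha⟩
      · have him : i ≤ Mrow c j := by
          rw [Mrow_succ] at h2
          by_cases hL : HasLeftNb c (j+1)
          · rw [if_pos hL] at h2
            rcases Nat.lt_or_ge (Mrow c j) i with h' | h'
            · exfalso; apply hA2; exact ⟨hL, by omega⟩
            · exact h'
          · rw [if_neg hL] at h2; omega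
        obtain ⟨a, ha⟩ := ih (by omega) i h1 him
        exact ⟨a, by rw [F_succ, if_neg hA1, if_neg hA2, if_pos ⟨h1, him⟩]; exact ha⟩

lemma F_val_le (c : List ℕ) : ∀ j i a, F c j i = some a → 1 ≤ a ∧ a ≤ off c (j+1) := by
  intro j
  induction j with
  | zero => intro i a h; simp [F] at h
  | succ j ih =>
    intro i a h
    have hoff : off c (j+1+1) = off c (j+1) + hgt c (j+1) := off_succ j
    have hTe : ∀ i' : ℕ, Tentry c i' (j+1) = off c (j+1) + i' := fun _ => rfl
    rw [F_succ] at h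
    split_ifs at h with h1 h2 h3
    · rw [Option.some_inj] at h
      rw [hTe i] at h
      omega
    · have := ih _ _ h; omega
    · have := ih _ _ h; omega

lemma F_succ_cases {c : List ℕ} {j i a : ℕ} (h : F c (j+1) i = some a) :
    (1 ≤ i ∧ i ≤ hgt c (j+1) ∧ a = Tentry c i (j+1)) ∨
    (hgt c (j+1) < i ∧ HasLeftNb c (j+1) ∧ i = hgt c (j+1) + 1 ∧
      F c j (hgt c (j+1)) = some a) ∨
    (hgt c (j+1) < i ∧ ¬(HasLeftNb c (j+1) ∧ i = hgt c (j+1) + 1) ∧ 1 ≤ i ∧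
      i ≤ Mrow c j ∧ F c j i = some a) := by
  rw [F_succ] at h
  split_ifs at h with h1 h2 h3
  · exact Or.inl ⟨h1.1, h1.2, (Option.some_inj.1 h).symm⟩
  · exact Or.inr (Or.inl ⟨by omega, h2.1, h2.2, h⟩)
  · exact Or.inr (Or.inr ⟨by omega, h2, h3.1, h3.2, h⟩)

lemma F_uniq (c : List ℕ) (hpos : ∀ x ∈ c, 0 < x) :
    ∀ j, j ≤ c.length → ∀ i i' a, F c j i = some a → F c j i' = some a → i = i' := by
  intro j
  induction j with
  | zero => intro _ i i' a h; simp [F] at h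
  | succ j ih =>
    intro hlen i i' a h h'
    have hTe : ∀ i'' : ℕ, Tentry c i'' (j+1) = off c (j+1) + i'' := fun _ => rfl
    rcases F_succ_cases h with ⟨p1, p2, p3⟩ | ⟨p1, p2, p3, p4⟩ | ⟨p1, p2, p3, p4, p5⟩ <;>
      rcases F_succ_cases h' with ⟨q1, q2, q3⟩ | ⟨q1, q2, q3, q4⟩ | ⟨q1, q2, q3, q4, q5⟩
    · rw [p3, hTe i] at q3; rw [hTe i'] at q3; omega
    · have := F_val_le c j _ _ q4; rw [hTe i] at p3; omega
    · have := F_val_le c j _ _ q5; rw [hTe i] at p3; omega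
    · have := F_val_le c j _ _ p4; rw [hTe i'] at q3; omega
    · omega
    · have := ih (by omega) _ _ _ p4 q5; omega
    · have := F_val_le c j _ _ p5; rw [hTe i'] at q3; omega
    · have := ih (by omega) _ _ _ q4 p5; omega
    · exact ih (by omega) _ _ _ p5 q5

noncomputable def sigma (c : List ℕ) (J : ℕ) (prev : ℕ → Option ℕ) (m T : ℕ) :
    ℕ → Option ℕ := fun i =>
  if 1 ≤ i ∧ i ≤ hgt c J then some (Tentry c i J)
  else if HasLeftNb c J ∧ i = hgt c J + 1 then
    (if hgt c J < T then prev (hgt c J) else none)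
  else if 1 ≤ i ∧ i ≤ m ∧ i < T then prev i
  else none

lemma sigma_succ_pt (c : List ℕ) (J : ℕ) (prev : ℕ → Option ℕ) (m T i : ℕ)
    (h1 : hgt c J = T → HasLeftNb c J → i = hgt c J + 1 → prev T = none)
    (h2 : i = T → 1 ≤ i → i ≤ m → ¬(1 ≤ i ∧ i ≤ hgt c J) →
      ¬(HasLeftNb c J ∧ i = hgt c J + 1) → prev T = none) :
    sigma c J prev m T i = sigma c J prev m (T+1) i := by
  simp only [sigma]
  by_cases hA1 : 1 ≤ i ∧ i ≤ hgt c J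
  · rw [if_pos hA1, if_pos hA1]
  · rw [if_neg hA1, if_neg hA1]
    by_cases hA2 : HasLeftNb c J ∧ i = hgt c J + 1
    · rw [if_pos hA2, if_pos hA2]
      by_cases hx : hgt c J < T
      · rw [if_pos hx, if_pos (by omega)]
      · by_cases hy : hgt c J < T + 1
        · have heq : hgt c J = T := by omega
          rw [if_neg hx, if_pos hy, heq, h1 heq hA2.1 hA2.2]
        · rw [if_neg hx, if_neg hy]
    · rw [if_neg hA2, if_neg hA2]
      by_cases h3 : 1 ≤ i ∧ i ≤ m ∧ i < T
      · rw [if_pos h3, if_pos ⟨h3.1, h3.2.1, by omega⟩]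
      · by_cases h3' : 1 ≤ i ∧ i ≤ m ∧ i < T + 1
        · have hiT : i = T := by omega
          have hn := h2 hiT h3'.1 h3'.2.1 hA1 hA2
          rw [if_neg h3, if_pos h3', hiT, hn]
        · rw [if_neg h3, if_neg h3']

lemma foldl_propStep (c : List ℕ) (J : ℕ) (prev : ℕ → Option ℕ) (m : ℕ)
    (h0 : prev 0 = none) (hnone : ∀ i, m < i → prev i = none)
    (hsome : ∀ i, 1 ≤ i → i ≤ m → (prev i).isSome)
    (hh : 1 ≤ hgt c J) (hLN : HasLeftNb c J → hgt c J ≤ m) :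
    ∀ T, (List.range T).foldl (propStep c J prev) (Tcol c J) = sigma c J prev m T := by
  intro T
  induction T with
  | zero =>
    funext i
    simp only [List.range_zero, List.foldl_nil, sigma, Tcol]
    split_ifs <;> first | rfl | (exfalso; omega)
  | succ T ih =>
    rw [List.range_succ, List.foldl_append, ih]
    simp only [List.foldl_cons, List.foldl_nil]
    cases hpT : prev T with
    | none =>
      simp only [propStep, hpT]
      funext i
      exact sigma_succ_pt c J prev m T i (fun _ _ _ => hpT) (fun _ _ _ _ _ => hpT)
    | some l =>
      simp only [propStep, hpT]
      have hT1 : 1 ≤ T := by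
        rcases Nat.eq_zero_or_pos T with rfl | hx
        · rw [h0] at hpT; cases hpT
        · exact hx
      have hTm : T ≤ m := by
        by_contra hx
        rw [hnone T (by omega)] at hpT; cases hpT
      by_cases hhT : hgt c J = T
      · rw [if_pos hhT]
        have hcur : sigma c J prev m T (T+1) = none := by
          simp only [sigma]
          rw [if_neg (by omega)]
          by_cases hL : HasLeftNb c J
          · rw [if_pos ⟨hL, by omega⟩, if_neg (by omega)]
          · rw [if_neg (by intro hx; exact hL hx.1), if_neg (by omega)]
        by_cases hLNb : HasLeftNb c J
        · rw [if_pos ⟨hLNb, hcur⟩]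
          funext i
          by_cases hiT : i = T + 1
          · subst hiT
            rw [Function.update_self]
            simp only [sigma]
            rw [if_neg (by omega), if_pos ⟨hLNb, by omega⟩, if_pos (by omega), hhT, hpT]
          · rw [Function.update_of_ne hiT]
            refine sigma_succ_pt c J prev m T i (fun _ _ hi => absurd (by omega : i = T + 1) hiT)
              (fun hiT' h1i _ hA1 _ => absurd ⟨h1i, by omega⟩ hA1)
        · rw [if_neg (by intro hx; exact hLNb hx.1)]
          funext i
          refine sigma_succ_pt c J prev m T i (fun _ hl _ => absurd hl hLNb)
            (fun hiT' h1i _ hA1 _ => absurd ⟨h1i, by omega⟩ hA1)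
      · rw [if_neg hhT]
        by_cases hTh : T ≤ hgt c J
        · have hsT : sigma c J prev m T T = some (Tentry c T J) := by
            simp only [sigma]
            rw [if_pos ⟨hT1, hTh⟩]
          rw [if_neg (by rw [hsT]; simp)]
          funext i
          refine sigma_succ_pt c J prev m T i (fun he _ _ => absurd he hhT)
            (fun hiT' h1i _ hA1 _ => absurd ⟨h1i, by omega⟩ hA1)
        · by_cases hA2T : HasLeftNb c J ∧ T = hgt c J + 1
          · have hsT : sigma c J prev m T T = prev (hgt c J) := by
              simp only [sigma]
              rw [if_neg (by omega), if_pos ⟨hA2T.1, hA2T.2⟩, if_pos (by omega)]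
            have hps : (prev (hgt c J)).isSome := hsome _ hh (hLN hA2T.1)
            rw [if_neg (by rw [hsT]; intro hx; rw [hx] at hps; simp at hps)]
            funext i
            refine sigma_succ_pt c J prev m T i (fun he _ _ => absurd he hhT)
              (fun hiT' _ _ _ hA2 => absurd ⟨hA2T.1, by omega⟩ hA2)
          · have hsT : sigma c J prev m T T = none := by
              simp only [sigma]
              rw [if_neg (by omega), if_neg hA2T, if_neg (by omega)]
            rw [if_pos hsT]
            funext i
            by_cases hiT : i = T
            · subst hiT
              rw [Function.update_self]
              simp only [sigma]
              rw [if_neg (by omega), if_neg hA2T, if_pos ⟨hT1, hTm, by omega⟩, hpT]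
            · rw [Function.update_of_ne hiT]
              refine sigma_succ_pt c J prev m T i (fun he _ _ => absurd he hhT)
                (fun hiT' _ _ _ _ => absurd hiT' hiT)

lemma TinfCol_eq_F (c : List ℕ) (hpos : ∀ x ∈ c, 0 < x) :
    ∀ j, j ≤ c.length → TinfCol c j = F c j := by
  intro j
  induction j with
  | zero => intro _; funext i; rfl
  | succ j ih =>
    intro hlen
    cases j with
    | zero =>
      funext i
      show Tcol c 1 i = F c 1 i
      have hF : F c 1 i = (if 1 ≤ i ∧ i ≤ hgt c 1 then some (Tentry c i 1)
          else if HasLeftNb c 1 ∧ i = hgt c 1 + 1 then F c 0 (hgt c 1)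
          else if 1 ≤ i ∧ i ≤ Mrow c 0 then F c 0 i else none) := F_succ c 0 i
      rw [hF]
      have hLN : ¬ HasLeftNb c 1 := by rintro ⟨i0, h1, h2, -⟩; omega
      have hM : Mrow c 0 = 0 := rfl
      unfold Tcol
      by_cases hA1 : 1 ≤ i ∧ i ≤ hgt c 1
      · rw [if_pos hA1, if_pos hA1]
      · rw [if_neg hA1, if_neg hA1, if_neg (fun hx => hLN hx.1),
          if_neg (by rintro ⟨hx1, hx2⟩; rw [hM] at hx2; omega)]
    | succ j' =>
      show TinfCol c (j'+2) = F c (j'+2)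
      have hprev : TinfCol c (j'+1) = F c (j'+1) := ih (by omega)
      have h1h : 1 ≤ hgt c (j'+2) := hgt_pos hpos (by omega) (by omega)
      have heq : TinfCol c (j'+2) = (List.range (c.sum + 2)).foldl
          (propStep c (j'+2) (TinfCol c (j'+1))) (Tcol c (j'+2)) := rfl
      rw [heq, hprev]
      rw [foldl_propStep c (j'+2) (F c (j'+1)) (Mrow c (j'+1)) (F_zero_row c _)
        (F_none_of_gt c _)
        (fun i hi1 hi2 => by
          obtain ⟨a, ha⟩ := F_isSome c hpos (j'+1) (by omega) i hi1 hi2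
          simp [ha]) h1h
        (fun hl => le_trans (hgt_le_of_LNb hl) (maxHgt_le_Mrow c (j'+1)))]
      funext i
      have hhs : hgt c (j'+2) < c.sum + 2 := by
        have : hgt c (j'+2) ≤ c.sum :=
          List.single_le_sum (fun x _ => Nat.zero_le x) _ (hgt_mem (by omega) (by omega))
        omega
      have hms : Mrow c (j'+1) < c.sum + 2 := by
        have h1 : Mrow c (j'+1) ≤ maxHgt c (j'+1+1) + 1 := Mrow_le c (j'+1)
        have h2 : maxHgt c (j'+1+1) ≤ c.sum := by
          unfold maxHgt
          apply foldr_max_le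
          intro y hy
          exact List.single_le_sum (fun x _ => Nat.zero_le x) _ (List.take_subset _ _ hy)
        omega
      simp only [sigma]
      have hF : F c (j'+2) i = (if 1 ≤ i ∧ i ≤ hgt c (j'+2) then some (Tentry c i (j'+2))
          else if HasLeftNb c (j'+2) ∧ i = hgt c (j'+2) + 1 then F c (j'+1) (hgt c (j'+2))
          else if 1 ≤ i ∧ i ≤ Mrow c (j'+1) then F c (j'+1) i else none) := F_succ c (j'+1) i
      rw [hF]
      by_cases hA1 : 1 ≤ i ∧ i ≤ hgt c (j'+2)
      · rw [if_pos hA1, if_pos hA1]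
      · rw [if_neg hA1, if_neg hA1]
        by_cases hA2 : HasLeftNb c (j'+2) ∧ i = hgt c (j'+2) + 1
        · rw [if_pos hA2, if_pos hA2, if_pos hhs]
        · rw [if_neg hA2, if_neg hA2]
          by_cases h3 : 1 ≤ i ∧ i ≤ Mrow c (j'+1)
          · rw [if_pos ⟨h3.1, h3.2, by omega⟩, if_pos h3]
          · rw [if_neg (by intro hx; exact h3 ⟨hx.1, hx.2.1⟩), if_neg h3]

lemma hgt_take {c : List ℕ} {K j : ℕ} (h1 : 1 ≤ j) (h2 : j ≤ K) :
    hgt (c.take K) j = hgt c j := by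
  rcases le_or_gt c.length K with hK | hK
  · rw [List.take_of_length_le hK]
  · unfold hgt
    rw [List.getD_eq_getElem (c.take K) 0 (by simp [List.length_take]; omega),
      List.getD_eq_getElem c 0 (by omega)]
    exact List.getElem_take

lemma off_take {c : List ℕ} {K j : ℕ} (h : j ≤ K + 1) : off (c.take K) j = off c j := by
  unfold off
  rw [List.take_take, min_eq_left (by omega : j - 1 ≤ K)]

lemma Tentry_take {c : List ℕ} {K j : ℕ} (h : j ≤ K + 1) (i : ℕ) :
    Tentry (c.take K) i j = Tentry c i j := by
  unfold Tentry
  rw [off_take h]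

lemma hasLeftNb_take {c : List ℕ} {K j : ℕ} (h1 : 1 ≤ j) (h2 : j ≤ K) :
    HasLeftNb (c.take K) j ↔ HasLeftNb c j := by
  unfold HasLeftNb
  constructor
  · rintro ⟨i, hi1, hi2, hi3, hi4⟩
    refine ⟨i, hi1, hi2, ?_, ?_⟩
    · rw [← hgt_take hi1 (by omega : i ≤ K), hi3, hgt_take h1 h2]
    · intro i' ha hb
      rw [← hgt_take (by omega : 1 ≤ i') (by omega : i' ≤ K), ← hgt_take h1 h2]
      exact hi4 i' ha hb
  · rintro ⟨i, hi1, hi2, hi3, hi4⟩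
    refine ⟨i, hi1, hi2, ?_, ?_⟩
    · rw [hgt_take hi1 (by omega : i ≤ K), hi3, hgt_take h1 h2]
    · intro i' ha hb
      rw [hgt_take (by omega : 1 ≤ i') (by omega : i' ≤ K), hgt_take h1 h2]
      exact hi4 i' ha hb

lemma Mrow_take {c : List ℕ} {K : ℕ} : ∀ j, j ≤ K → Mrow (c.take K) j = Mrow c j := by
  intro j
  induction j with
  | zero => intro _; rfl
  | succ j ih =>
    intro hj
    rw [Mrow_succ, Mrow_succ, hgt_take (by omega) hj, ih (by omega)]
    by_cases hL : HasLeftNb c (j+1)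
    · rw [if_pos ((hasLeftNb_take (by omega) hj).2 hL), if_pos hL]
    · rw [if_neg (fun hx => hL ((hasLeftNb_take (by omega) hj).1 hx)), if_neg hL]

lemma F_take {c : List ℕ} {K : ℕ} : ∀ j, j ≤ K → F (c.take K) j = F c j := by
  intro j
  induction j with
  | zero => intro _; rfl
  | succ j ih =>
    intro hj
    funext i
    rw [F_succ, F_succ, hgt_take (by omega) hj, Mrow_take j (by omega), ih (by omega),
      Tentry_take (by omega) i]
    by_cases hL : HasLeftNb c (j+1)
    · rw [if_congr (iff_of_true ((hasLeftNb_take (by omega) hj).2 hL) hL |>.and Iff.rfl) rfl rfl]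
    · rw [if_neg (fun hx => hL ((hasLeftNb_take (by omega) hj).1 hx.1) : ¬(HasLeftNb (c.take K) (j+1) ∧ i = hgt c (j+1) + 1)), if_neg (fun hx => hL hx.1 : ¬(HasLeftNb c (j+1) ∧ i = hgt c (j+1) + 1))]

lemma lineB_one_iff (c : List ℕ) (a i j : ℕ) :
    LineB c a i j Lab.one ↔ (2 ≤ j ∧ j ≤ c.length ∧ 1 ≤ i ∧
      ((maxHgt c j < hgt c j ∧ i ≤ maxHgt c j + 1 ∧ TinfCol c (j - 1) i = some a)
       ∨ (hgt c j ≤ maxHgt c j ∧ i + 1 ≤ hgt c j ∧ TinfCol c (j - 1) i = some a)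
       ∨ (hgt c j ≤ maxHgt c j ∧ i = hgt c j ∧
           ¬(∃ j', 1 ≤ j' ∧ j' < j ∧ hgt c j' = hgt c j) ∧
           TinfCol c (j - 1) i = some a)
       ∨ (hgt c j ≤ maxHgt c j ∧ i = hgt c j ∧
           (∃ j', 1 ≤ j' ∧ j' < j ∧ hgt c j' = hgt c j) ∧
           TinfCol c (j - 1) (i + 1) = some a))) := Iff.rfl

lemma lemmaB {d : List ℕ} (hpos : ∀ x ∈ d, 0 < x) {J r a : ℕ}
    (hJ1 : 1 ≤ J) (hJK : J + 1 ≤ d.length) (hr : F d J r = some a) :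
    ((∃ i', LineB d a i' (J+1) Lab.one) ↔ ¬ ∃ r', F d (J+1) r' = some a) := by
  have hr1 : 1 ≤ r := by
    rcases Nat.eq_zero_or_pos r with rfl | hx
    · rw [F_zero_row] at hr; cases hr
    · exact hx
  have hrm : r ≤ Mrow d J := by
    by_contra hx
    rw [F_none_of_gt d J r (by omega)] at hr; cases hr
  have hub : a ≤ off d (J+1) := (F_val_le d J r a hr).2
  have hMS : Mrow d J ≤ maxHgt d (J+1) + 1 := Mrow_le d J
  have hh1 : 1 ≤ hgt d (J+1) := hgt_pos hpos (by omega) hJK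
  have hES : HasLeftNb d (J+1) → hgt d (J+1) ≤ maxHgt d (J+1) := hgt_le_of_LNb
  have hTinf : TinfCol d J = F d J := TinfCol_eq_F d hpos J (by omega)
  have hTe : ∀ r' : ℕ, Tentry d r' (J+1) = off d (J+1) + r' := fun _ => rfl
  have haliveIff : (∃ r', F d (J+1) r' = some a) ↔
      ((HasLeftNb d (J+1) ∧ r = hgt d (J+1)) ∨
       (hgt d (J+1) < r ∧ ¬(HasLeftNb d (J+1) ∧ r = hgt d (J+1) + 1))) := by
    constructor
    · rintro ⟨r', hr'⟩
      rcases F_succ_cases hr' with ⟨p1, p2, p3⟩ | ⟨p1, p2, p3, p4⟩ | ⟨p1, p2, p3, p4, p5⟩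
      · rw [hTe r'] at p3; omega
      · have := F_uniq d hpos J (by omega) _ _ _ p4 hr
        exact Or.inl ⟨p2, by omega⟩
      · have := F_uniq d hpos J (by omega) _ _ _ p5 hr
        exact Or.inr ⟨by omega, fun hx => p2 ⟨hx.1, by omega⟩⟩
    · rintro (⟨hE, hrh⟩ | ⟨hlt, hne⟩)
      · refine ⟨hgt d (J+1) + 1, ?_⟩
        rw [F_succ, if_neg (by omega), if_pos ⟨hE, rfl⟩, ← hrh]
        exact hr
      · refine ⟨r, ?_⟩
        rw [F_succ, if_neg (by omega), if_neg hne, if_pos ⟨hr1, hrm⟩]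
        exact hr
  have hlineIff : (∃ i', LineB d a i' (J+1) Lab.one) ↔
      (maxHgt d (J+1) < hgt d (J+1) ∨
       (hgt d (J+1) ≤ maxHgt d (J+1) ∧
        (r < hgt d (J+1) ∨ (r = hgt d (J+1) ∧ ¬HasLeftNb d (J+1)) ∨
         (HasLeftNb d (J+1) ∧ r = hgt d (J+1) + 1)))) := by
    constructor
    · rintro ⟨i', hL⟩
      rw [lineB_one_iff] at hL
      obtain ⟨-, -, hi1, hdisj⟩ := hL
      rcases hdisj with ⟨hc1, hc2, hc3⟩ | ⟨hc1, hc2, hc3⟩ | ⟨hc1, hc2, hc3, hc4⟩ |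
        ⟨hc1, hc2, hc3, hc4⟩
      · exact Or.inl hc1
      · rw [Nat.add_sub_cancel, hTinf] at hc3
        have := F_uniq d hpos J (by omega) _ _ _ hc3 hr
        exact Or.inr ⟨hc1, Or.inl (by omega)⟩
      · rw [Nat.add_sub_cancel, hTinf] at hc4
        have := F_uniq d hpos J (by omega) _ _ _ hc4 hr
        refine Or.inr ⟨hc1, Or.inr (Or.inl ⟨by omega, fun hE => hc3 ?_⟩)⟩
        exact (hasLeftNb_iff d (J+1)).1 hE
      · rw [Nat.add_sub_cancel, hTinf] at hc4
        have := F_uniq d hpos J (by omega) _ _ _ hc4 hr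
        exact Or.inr ⟨hc1, Or.inr (Or.inr ⟨(hasLeftNb_iff d (J+1)).2 hc3, by omega⟩)⟩
    · rintro (hc | ⟨hSh, hD⟩)
      · refine ⟨r, (lineB_one_iff d a r (J+1)).2 ⟨by omega, hJK, hr1, Or.inl ⟨hc, by omega, ?_⟩⟩⟩
        rw [Nat.add_sub_cancel, hTinf]
        exact hr
      · rcases hD with hlt | ⟨heq, hnE⟩ | ⟨hE, heq⟩
        · refine ⟨r, (lineB_one_iff d a r (J+1)).2 ⟨by omega, hJK, hr1,
            Or.inr (Or.inl ⟨hSh, by omega, ?_⟩)⟩⟩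
          rw [Nat.add_sub_cancel, hTinf]
          exact hr
        · refine ⟨hgt d (J+1), (lineB_one_iff d a _ (J+1)).2 ⟨by omega, hJK, hh1,
            Or.inr (Or.inr (Or.inl ⟨hSh, rfl, fun hex => hnE ((hasLeftNb_iff d (J+1)).2 hex), ?_⟩))⟩⟩
          rw [Nat.add_sub_cancel, hTinf, ← heq]
          exact hr
        · refine ⟨hgt d (J+1), (lineB_one_iff d a _ (J+1)).2 ⟨by omega, hJK, hh1,
            Or.inr (Or.inr (Or.inr ⟨hSh, rfl, (hasLeftNb_iff d (J+1)).1 hE, ?_⟩))⟩⟩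
          rw [Nat.add_sub_cancel, hTinf, ← heq]
          exact hr
  rw [hlineIff, haliveIff]
  constructor
  · rintro (hc | ⟨hSh, hD⟩)
    · rintro (⟨hE, hrh⟩ | ⟨hlt, -⟩)
      · exact absurd (hES hE) (by omega)
      · omega
    · rcases hD with hlt | ⟨heq, hnE⟩ | ⟨hE, heq⟩ <;>
        rintro (⟨hE', hrh⟩ | ⟨hlt', hne'⟩)
      · omega
      · omega
      · exact hnE hE'
      · omega
      · omega
      · exact hne' ⟨hE, heq⟩
  · intro hdead
    by_cases hSh : maxHgt d (J+1) < hgt d (J+1)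
    · exact Or.inl hSh
    · refine Or.inr ⟨by omega, ?_⟩
      by_cases hE : HasLeftNb d (J+1)
      · rcases Nat.lt_trichotomy r (hgt d (J+1)) with h1 | h1 | h1
        · exact Or.inl h1
        · exact absurd (Or.inl ⟨hE, h1⟩) hdead
        · by_cases h2 : r = hgt d (J+1) + 1
          · exact Or.inr (Or.inr ⟨hE, h2⟩)
          · exact absurd (Or.inr ⟨h1, fun hx => h2 hx.2⟩) hdead
      · rcases Nat.lt_trichotomy r (hgt d (J+1)) with h1 | h1 | h1
        · exact Or.inl h1
        · exact Or.inr (Or.inl ⟨h1, hE⟩)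
        · exact absurd (Or.inr ⟨h1, fun hx => hE hx.1⟩) hdead

lemma main_iff {d : List ℕ} (hpos : ∀ x ∈ d, 0 < x) {i j : ℕ}
    (hbox : IsBox d i j) :
    (∃ r, F d d.length r = some (Tentry d i j)) ↔
      ∀ i' j', ¬ LineB d (Tentry d i j) i' j' Lab.one := by
  obtain ⟨hj1, hjK, hi1, hih⟩ := hbox
  obtain ⟨j0, rfl⟩ : ∃ j0, j = j0 + 1 := ⟨j - 1, by omega⟩
  set a := Tentry d i (j0+1) with ha
  have haoff : a = off d (j0+1) + i := rfl
  have hoffs : off d (j0+1+1) = off d (j0+1) + hgt d (j0+1) := off_succ j0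
  have hstart : F d (j0+1) i = some a := by
    rw [F_succ, if_pos ⟨hi1, hih⟩]
  have hAup : ∀ J, j0 + 1 ≤ J → (∃ r, F d (J+1) r = some a) → (∃ r, F d J r = some a) := by
    rintro J hJ ⟨r', hr'⟩
    rcases F_succ_cases hr' with ⟨p1, p2, p3⟩ | ⟨-, -, -, p4⟩ | ⟨-, -, -, -, p5⟩
    · exfalso
      have he : Tentry d r' (J+1) = off d (J+1) + r' := rfl
      have hm : off d (j0+1+1) ≤ off d (J+1) := off_mono (by omega)
      omega
    · exact ⟨_, p4⟩
    · exact ⟨_, p5⟩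
  have hexOfLine : ∀ i' J, J + 1 ≤ d.length → LineB d a i' (J+1) Lab.one →
      ∃ r, F d J r = some a := by
    intro i' J hJL hL
    have hT : TinfCol d J = F d J := TinfCol_eq_F d hpos J (by omega)
    rw [lineB_one_iff] at hL
    obtain ⟨-, -, -, hL4⟩ := hL
    rcases hL4 with ⟨-, -, hc⟩ | ⟨-, -, hc⟩ | ⟨-, -, -, hc⟩ | ⟨-, -, -, hc⟩ <;>
      (rw [Nat.add_sub_cancel, hT] at hc; exact ⟨_, hc⟩)
  have hNoEarly : ∀ i' j', j' ≤ j0 + 1 → ¬ LineB d a i' j' Lab.one := by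
    intro i' j' hj' hL
    have hL2 := ((lineB_one_iff d a i' j').1 hL).1
    have hLK := ((lineB_one_iff d a i' j').1 hL).2.1
    obtain ⟨J, rfl⟩ : ∃ J, j' = J + 1 := ⟨j' - 1, by omega⟩
    obtain ⟨r, hrr⟩ := hexOfLine i' J (by omega) hL
    have hv := (F_val_le d J r a hrr).2
    have hmono : off d (J+1) ≤ off d (j0+1) := off_mono (by omega)
    omega
  constructor
  · intro halive i' j' hL
    have hL2 := ((lineB_one_iff d a i' j').1 hL).1
    have hLK := ((lineB_one_iff d a i' j').1 hL).2.1
    by_cases hj' : j' ≤ j0 + 1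
    · exact hNoEarly i' j' hj' hL
    · obtain ⟨J, rfl⟩ : ∃ J, j' = J + 1 := ⟨j' - 1, by omega⟩
      obtain ⟨r, hrr⟩ := hexOfLine i' J (by omega) hL
      have hdead := (lemmaB hpos (by omega) (by omega) hrr).1 ⟨i', hL⟩
      have hAliveJ1 : ∃ r', F d (J+1) r' = some a := by
        have hchain : ∀ mgap Jx, Jx + mgap = d.length → j0 + 1 ≤ Jx →
            ∃ r', F d Jx r' = some a := by
          intro mgap
          induction mgap with
          | zero =>
            intro Jx hJx hx
            have : Jx = d.length := by omega
            rw [this]; exact halive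
          | succ mg ihm =>
            intro Jx hJx hx
            exact hAup Jx hx (ihm (Jx+1) (by omega) (by omega))
        exact hchain (d.length - (J+1)) (J+1) (by omega) (by omega)
      exact hdead hAliveJ1
  · intro hno
    have hall : ∀ J, j0 + 1 ≤ J → J ≤ d.length → ∃ r, F d J r = some a := by
      intro J
      induction J with
      | zero => intro h _; omega
      | succ J ihJ =>
        intro hJ hJK
        by_cases hJj : j0 + 1 = J + 1
        · rw [← hJj]; exact ⟨i, hstart⟩
        · obtain ⟨r, hrr⟩ := ihJ (by omega) (by omega)
          by_contra hdead
          obtain ⟨i', hLi⟩ := (lemmaB hpos (by omega) hJK hrr).2 hdead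
          exact hno i' (J+1) hLi
    exact hall d.length (by omega) le_rfl

lemma lineB_star_iff (c : List ℕ) (a i j : ℕ) :
    LineB c a i j Lab.star ↔ (2 ≤ j ∧ j ≤ c.length ∧ 1 ≤ i ∧
      (hgt c j ≤ maxHgt c j ∧ i = hgt c j ∧
        (∃ j', 1 ≤ j' ∧ j' < j ∧ hgt c j' = hgt c j) ∧
        TinfCol c (j - 1) i = some a)) := Iff.rfl

end S16

/-- suppose the height of `C_k` strictly exceeds the maximal column
height of `D^k`.  Then every line of `ℓ(D)` joining a box of `D^k` to a box of
`C_k` is labelled `1`, and the boxes of `D^k` joined to a box of `C_k` by a line of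
`ℓ(D)` are exactly the boxes that are right extremal in `D^k` relative to
`ℓ(D^k)`. -/
theorem statement16 (n : ℕ) (hn : 0 < n) (c : List ℕ) (hc : IsComposition c n)
    (hk : 2 ≤ c.length)
    (htall : maxH (c.take (c.length - 1)) < hgt c c.length) :
    (∀ a i, ¬ LineB c a i c.length Lab.star) ∧
    (∀ i j, IsBox (c.take (c.length - 1)) i j →
      ((∃ i', LineB c (Tentry c i j) i' c.length Lab.one) ↔
        ∀ i' j', ¬ LineB (c.take (c.length - 1))
          (Tentry (c.take (c.length - 1)) i j) i' j' Lab.one)) := by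
  obtain ⟨hsum, hpos⟩ := hc
  have hmH : maxHgt c c.length = maxH (c.take (c.length - 1)) := rfl
  have htall' : maxHgt c c.length < hgt c c.length := by rw [hmH]; exact htall
  constructor
  · intro a i hL
    have h4 := ((S16.lineB_star_iff c a i c.length).1 hL).2.2.2.1
    omega
  · intro i j hbox
    obtain ⟨hj1, hjL, hi1, hiH⟩ := hbox
    have hd_len : (c.take (c.length - 1)).length = c.length - 1 := by
      rw [List.length_take]; omega
    have hd_pos : ∀ x ∈ c.take (c.length - 1), 0 < x :=
      fun x hx => hpos x (List.take_subset _ _ hx)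
    have hjL' : j ≤ c.length - 1 := by omega
    have hTeq : Tentry c i j = Tentry (c.take (c.length - 1)) i j :=
      (S16.Tentry_take (by omega) i).symm
    have hFeq : S16.F (c.take (c.length - 1)) (c.length - 1) = S16.F c (c.length - 1) :=
      S16.F_take (c.length - 1) le_rfl
    have hTinf : TinfCol c (c.length - 1) = S16.F c (c.length - 1) :=
      S16.TinfCol_eq_F c hpos _ (by omega)
    have hMr : S16.Mrow c (c.length - 1) ≤ maxHgt c (c.length - 1 + 1) + 1 :=
      S16.Mrow_le c (c.length - 1)
    have hidx : c.length - 1 + 1 = c.length := by omega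
    rw [hidx] at hMr
    rw [hTeq, ← S16.main_iff hd_pos ⟨hj1, by omega, hi1, hiH⟩]
    rw [hd_len, hFeq]
    constructor
    · rintro ⟨i', hL⟩
      have hL4 := ((S16.lineB_one_iff c _ i' c.length).1 hL).2.2.2
      rcases hL4 with ⟨-, -, hc3⟩ | ⟨hc1, -, -⟩ | ⟨hc1, -, -, -⟩ | ⟨hc1, -, -, -⟩
      · rw [hTinf] at hc3
        exact ⟨i', hc3⟩
      · omega
      · omega
      · omega
    · rintro ⟨r, hrF⟩
      have hr1 : 1 ≤ r := by
        rcases Nat.eq_zero_or_pos r with rfl | hx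
        · rw [S16.F_zero_row] at hrF; cases hrF
        · exact hx
      have hrm : r ≤ S16.Mrow c (c.length - 1) := by
        by_contra hx
        rw [S16.F_none_of_gt c _ r (by omega)] at hrF; cases hrF
      refine ⟨r, (S16.lineB_one_iff c _ r c.length).2 ⟨hk, le_rfl, hr1,
        Or.inl ⟨htall', by omega, ?_⟩⟩⟩
      rw [hTinf]
      exact hrF
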